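/- Assume a + b > c. Then (i) there exist positive integers m and n with (c−b)·m ≤ b·n and (c−a)·n ≤ a·m; and (ii) for every pair of positive integers m, n satisfying (c−b)·m ≤ b·n and (c−a)·n ≤ a·m, both z_2^{m+n} and z_3^{m+n} belong to J. -/
import Mathlib

open MvPolynomial

-- key helper: a monomial X0^i * X1^j with i+j>0 lies in span {X0, X1}
lemma aux_mem_mm {K : Type*} [Field K] (i j : ℕ) (hij : 0 < i + j) :
    (X 0 : MvPolynomial (Fin 2) K) ^ i * X 1 ^ j ∈
      Ideal.span {(X 0 : MvPolynomial (Fin 2) K), X 1} := by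
  have hx : (X 0 : MvPolynomial (Fin 2) K) ∈ Ideal.span {(X 0 : MvPolynomial (Fin 2) K), X 1} :=
    Ideal.subset_span (by simp)
  have hy : (X 1 : MvPolynomial (Fin 2) K) ∈ Ideal.span {(X 0 : MvPolynomial (Fin 2) K), X 1} :=
    Ideal.subset_span (by simp)
  rcases i with _ | i
  · rcases j with _ | j
    · omega
    · simpa [pow_succ, mul_assoc] using Ideal.mul_mem_left _ ((X 1 : MvPolynomial (Fin 2) K) ^ j) hy
  · have : (X 0 : MvPolynomial (Fin 2) K) ^ (i + 1) * X 1 ^ j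
        = (X 0 ^ i * X 1 ^ j) * X 0 := by ring
    rw [this]
    exact Ideal.mul_mem_left _ _ hx

lemma aux_key {K : Type*} [Field K] (a b c : ℕ) (e f : ℕ)
    (u : Fin 4 → MvPolynomial (Fin 2) K)
    (hu0 : u 0 = X 0 ^ c) (hu3 : u 3 = X 1 ^ c)
    (I mm : Ideal (MvPolynomial (Fin 2) K))
    (hI : I = Ideal.span {u 0, u 1, u 2, u 3})
    (hmm : mm = Ideal.span {(X 0 : MvPolynomial (Fin 2) K), X 1})
    (m n : ℕ) (h1 : c * m ≤ e * (m + n)) (h2 : c * n ≤ f * (m + n))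
    (h3 : c * (m+n) < e * (m+n) + f * (m+n)) :
    (X 0 : MvPolynomial (Fin 2) K) ^ (e * (m+n)) * X 1 ^ (f * (m+n)) ∈ mm * I ^ (m + n) := by
  have hu0I : u 0 ∈ I := hI ▸ Ideal.subset_span (by simp)
  have hu3I : u 3 ∈ I := hI ▸ Ideal.subset_span (by simp)
  have hG : u 0 ^ m * u 3 ^ n ∈ I ^ (m + n) := by
    rw [pow_add]
    exact Ideal.mul_mem_mul (Ideal.pow_mem_pow hu0I m) (Ideal.pow_mem_pow hu3I n)
  set i := e * (m + n) - c * m with hi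
  set j := f * (m + n) - c * n with hj
  have hd : c * (m + n) = c * m + c * n := Nat.mul_add c m n
  have hijpos : 0 < i + j := by omega
  have heq : (X 0 : MvPolynomial (Fin 2) K) ^ (e * (m+n)) * X 1 ^ (f * (m+n))
      = (X 0 ^ i * X 1 ^ j) * (u 0 ^ m * u 3 ^ n) := by
    rw [hu0, hu3, ← pow_mul, ← pow_mul,
      show e * (m+n) = i + c * m by omega, show f * (m+n) = j + c * n by omega,
      pow_add, pow_add]
    ring
  rw [heq]
  exact Ideal.mul_mem_mul (hmm ▸ aux_mem_mm i j hijpos) hG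

theorem stmt_8 {K : Type*} [Field K] (a b c : ℕ)
    (ha : 0 < a) (hab : a < b) (hbc : b < c)
    (hgcd : Nat.gcd a (Nat.gcd b c) = 1)
    (u : Fin 4 → MvPolynomial (Fin 2) K)
    (hu0 : u 0 = X 0 ^ c) (hu1 : u 1 = X 0 ^ b * X 1 ^ a)
    (hu2 : u 2 = X 0 ^ a * X 1 ^ b) (hu3 : u 3 = X 1 ^ c)
    (I mm : Ideal (MvPolynomial (Fin 2) K))
    (hI : I = Ideal.span {u 0, u 1, u 2, u 3})
    (hmm : mm = Ideal.span {(X 0 : MvPolynomial (Fin 2) K), X 1})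
    (J : Ideal (MvPolynomial (Fin 4) K))
    (hJ : ∀ f : MvPolynomial (Fin 4) K,
      f ∈ J ↔ ∀ d : ℕ, aeval u (homogeneousComponent d f) ∈ mm * I ^ d)
    (habc : c < a + b) :
    (∃ m n : ℕ, 0 < m ∧ 0 < n ∧ (c - b) * m ≤ b * n ∧ (c - a) * n ≤ a * m) ∧
    (∀ m n : ℕ, 0 < m → 0 < n → (c - b) * m ≤ b * n → (c - a) * n ≤ a * m →
      (X 1 : MvPolynomial (Fin 4) K) ^ (m + n) ∈ J ∧
      (X 2 : MvPolynomial (Fin 4) K) ^ (m + n) ∈ J) := by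
  constructor
  · refine ⟨b, c - b, by omega, by omega, le_of_eq (Nat.mul_comm _ _), ?_⟩
    calc (c - a) * (c - b) ≤ b * a :=
          Nat.mul_le_mul (by omega) (by omega)
      _ = a * b := Nat.mul_comm _ _
  · intro m n hm hn h1 h2
    -- arithmetic facts
    have hbm : b * m ≤ c * m := Nat.mul_le_mul_right m (le_of_lt hbc)
    have han : a * n ≤ c * n := Nat.mul_le_mul_right n (by omega)
    have h1' : c * m - b * m ≤ b * n := by rwa [← Nat.sub_mul]
    have h2' : c * n - a * n ≤ a * m := by rwa [← Nat.sub_mul]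
    have hcm : c * m ≤ b * (m + n) := by rw [Nat.mul_add]; omega
    have hcn : c * n ≤ a * (m + n) := by rw [Nat.mul_add]; omega
    have hcs : c * (m + n) < a * (m + n) + b * (m + n) := by
      have := (Nat.mul_lt_mul_right (Nat.add_pos_left hm n)).mpr habc
      rwa [Nat.add_mul] at this
    -- membership via hJ, for a power of a variable
    have main : ∀ (k : Fin 4) (e f p q : ℕ), u k = X 0 ^ e * X 1 ^ f →
        m + n = p + q → c * p ≤ e * (p + q) → c * q ≤ f * (p + q) →
        c * (p + q) < e * (p + q) + f * (p + q) →
        (X k : MvPolynomial (Fin 4) K) ^ (m + n) ∈ J := by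
      intro k e f p q huk hpq hp hq hef
      rw [hJ]
      intro d
      have hhom : ((X k : MvPolynomial (Fin 4) K) ^ (m + n)) ∈
          homogeneousSubmodule (Fin 4) K (m + n) := by
        rw [mem_homogeneousSubmodule]
        simpa using (isHomogeneous_X K k).pow (m + n)
      rw [homogeneousComponent_of_mem hhom]
      by_cases hd : d = m + n
      · subst hd
        rw [if_pos rfl, map_pow, aeval_X, huk, mul_pow, ← pow_mul, ← pow_mul, hpq]
        exact aux_key a b c e f u hu0 hu3 I mm hI hmm p q hp hq hef
      · rw [if_neg hd, map_zero]
        exact Ideal.zero_mem _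
    refine ⟨main 1 b a m n hu1 rfl hcm hcn (by omega),
      main 2 a b n m hu2 (Nat.add_comm m n) ?_ ?_ ?_⟩
    · rw [Nat.add_comm n m]; exact hcn
    · rw [Nat.add_comm n m]; exact hcm
    · rw [Nat.add_comm n m]; omega
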